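/- Let T¹₁₁ be ℤ³ with the bilinear form given by the Gram matrix [[2,1,0],[1,6,0],[0,0,22]], and write Q(x) = (x,x). Then: (i) there exists x ∈ ℤ³ with Q(x) = 2 (so the minimal positive value of Q is 2, since the lattice is even positive definite); (ii) there is no primitive vector x ∈ ℤ³ with Q(x) ∈ {4, 12, 14, 16, 20}; (iii) the minimum of Q(f) over primitive vectors f ∈ ℤ³ of divisor 2 (i.e., such that (f,y) ∈ 2ℤ for all y ∈ ℤ³) is 22. -/

import Mathlib

open Matrix

/-!
Invariant polarizations of the twistor family `TW(X₁)`:  properties of the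
positive definite even lattice `T¹₁₁` with Gram matrix
`[[2,1,0],[1,6,0],[0,0,22]]`.
-/

/-- The Gram matrix of `T¹₁₁`. -/
def T1 : Matrix (Fin 3) (Fin 3) ℤ := !![2, 1, 0; 1, 6, 0; 0, 0, 22]

/-- The bilinear form of `T¹₁₁`. -/
def bil (x y : Fin 3 → ℤ) : ℤ := x ⬝ᵥ T1.mulVec y

/-- The quadratic form `Q(x) = (x, x)` of `T¹₁₁`. -/
def Q (x : Fin 3 → ℤ) : ℤ := bil x x

/-- `x` is primitive: the gcd of its coordinates is `1`. -/
def IsPrimitiveVec (x : Fin 3 → ℤ) : Prop :=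
  Int.gcd (Int.gcd (x 0) (x 1)) (x 2) = 1

/-- `x` has divisor `2`: `(x, y) ∈ 2ℤ` for all `y ∈ ℤ³`. -/
def HasDivisorTwo (x : Fin 3 → ℤ) : Prop := ∀ y : Fin 3 → ℤ, 2 ∣ bil x y

lemma Q_eq (x : Fin 3 → ℤ) :
    Q x = 2*(x 0)^2 + 2*(x 0)*(x 1) + 6*(x 1)^2 + 22*(x 2)^2 := by
  simp [Q, bil, T1, Matrix.mulVec, dotProduct, Fin.sum_univ_three]
  ring

lemma bil_e0 (x : Fin 3 → ℤ) : bil x ![1,0,0] = 2*(x 0) + x 1 := by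
  simp [bil, T1, Matrix.mulVec, dotProduct, Fin.sum_univ_three]
  ring
lemma bil_e1 (x : Fin 3 → ℤ) : bil x ![0,1,0] = x 0 + 6*(x 1) := by
  simp [bil, T1, Matrix.mulVec, dotProduct, Fin.sum_univ_three]
  ring

theorem T1_polarizations :
    (∃ x : Fin 3 → ℤ, Q x = 2) ∧
    (¬ ∃ x : Fin 3 → ℤ, IsPrimitiveVec x ∧
      (Q x = 4 ∨ Q x = 12 ∨ Q x = 14 ∨ Q x = 16 ∨ Q x = 20)) ∧
    IsLeast {q : ℤ | ∃ f : Fin 3 → ℤ, IsPrimitiveVec f ∧ HasDivisorTwo f ∧ Q f = q}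
      22 := by
  refine ⟨⟨![1,0,0], by rw [Q_eq]; norm_num [Matrix.cons_val_two, Matrix.vecHead, Matrix.vecTail]⟩, ?_, ?_⟩
  · rintro ⟨x, -, hq⟩
    rw [Q_eq x] at hq
    set a := x 0; set b := x 1; set c := x 2
    have hle : 2*a^2 + 2*a*b + 6*b^2 + 22*c^2 ≤ 20 := by omega
    have hc : c = 0 := by nlinarith [sq_nonneg a, sq_nonneg (a+b), sq_nonneg b, sq_nonneg c]
    rw [hc] at hq
    have hb1 : -1 ≤ b := by nlinarith [sq_nonneg (2*a+b)]
    have hb2 : b ≤ 1 := by nlinarith [sq_nonneg (2*a+b)]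
    have ha1 : -3 ≤ a := by nlinarith [sq_nonneg (2*a+b), sq_nonneg b]
    have ha2 : a ≤ 3 := by nlinarith [sq_nonneg (2*a+b), sq_nonneg b]
    interval_cases a <;> interval_cases b <;> omega
  · constructor
    · refine ⟨![0,0,1], by simp [IsPrimitiveVec], ?_, by rw [Q_eq]; norm_num [Matrix.cons_val_two, Matrix.vecHead, Matrix.vecTail]⟩
      intro y
      refine ⟨11 * y 2, ?_⟩
      simp [bil, T1, Matrix.mulVec, dotProduct, Fin.sum_univ_three]
      ring
    · rintro q ⟨f, hp, hd, rfl⟩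
      have h0 := hd ![1,0,0]
      have h1 := hd ![0,1,0]
      rw [bil_e0] at h0
      rw [bil_e1] at h1
      set a := f 0; set b := f 1; set c := f 2
      have hda : 2 ∣ a := by omega
      have hdb : 2 ∣ b := by omega
      have hdc : ¬ (2 ∣ c) := by
        intro hdc
        have hg : (2 : ℤ) ∣ (Int.gcd a b : ℤ) := Int.dvd_coe_gcd hda hdb
        have : (2 : ℤ) ∣ (Int.gcd (Int.gcd a b : ℤ) c : ℤ) := Int.dvd_coe_gcd hg hdc
        rw [hp] at this
        norm_num at this
      have hc0 : c ≠ 0 := fun h => hdc (by rw [h]; norm_num)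
      have h1c : 1 ≤ c^2 := by
        rcases hc0.lt_or_gt with h|h <;> nlinarith
      rw [Q_eq]
      nlinarith [sq_nonneg a, sq_nonneg (a+b), sq_nonneg b]
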